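/- For all natural numbers m and n with m ≥ n, the alternating sum ∑_{k=0}^{n} (-1)^k · C(m+n-k, m) · C(m, k) equals 1. -/

import Mathlib

open Finset

lemma alt_binom_aux (m : ℕ) : ∀ n : ℕ,
    ∑ k ∈ Finset.range (n + 1),
      (-1 : ℤ) ^ k * ((m + (n - k)).choose m : ℤ) * (m.choose k : ℤ) = 1 := by
  induction m with
  | zero =>
    intro n
    rw [Finset.sum_eq_single 0]
    · simp
    · intro k hk hk0
      have : Nat.choose 0 k = 0 := Nat.choose_eq_zero_of_lt (Nat.pos_of_ne_zero hk0)
      simp [this]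
    · simp
  | succ m ih =>
    intro n
    induction n with
    | zero => simp
    | succ n ihn =>
      -- key : the "G" sum vanishes
      have key : ∑ k ∈ Finset.range (n + 2),
          (-1 : ℤ) ^ k * ((m + (n + 1 - k)).choose m : ℤ) * ((m+1).choose k : ℤ) = 0 := by
        rw [Finset.sum_range_succ' _ (n+1)]
        have step : ∀ k ∈ Finset.range (n + 1),
            (-1 : ℤ) ^ (k+1) * ((m + (n + 1 - (k+1))).choose m : ℤ) * ((m+1).choose (k+1) : ℤ)
            = (-1 : ℤ) ^ (k+1) * ((m + (n + 1 - (k+1))).choose m : ℤ) * (m.choose (k+1) : ℤ)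
              - (-1 : ℤ) ^ k * ((m + (n - k)).choose m : ℤ) * (m.choose k : ℤ) := by
          intro k hk
          have h1 : n + 1 - (k+1) = n - k := by omega
          rw [h1, Nat.choose_succ_succ]
          push_cast
          ring
        rw [Finset.sum_congr rfl step, Finset.sum_sub_distrib, ih n]
        have expand : ∑ k ∈ Finset.range (n + 1),
            (-1 : ℤ) ^ (k+1) * ((m + (n + 1 - (k+1))).choose m : ℤ) * (m.choose (k+1) : ℤ)
            + (-1 : ℤ) ^ 0 * ((m + (n + 1 - 0)).choose m : ℤ) * ((m+1).choose 0 : ℤ)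
            = ∑ k ∈ Finset.range (n + 2),
              (-1 : ℤ) ^ k * ((m + (n + 1 - k)).choose m : ℤ) * (m.choose k : ℤ) := by
          rw [Finset.sum_range_succ' (fun k =>
            (-1 : ℤ) ^ k * ((m + (n + 1 - k)).choose m : ℤ) * (m.choose k : ℤ)) (n+1)]
          simp
        rw [sub_add_eq_add_sub, expand, ih (n+1)]
        ring
      -- main computation
      have split : ∀ k ∈ Finset.range (n + 2),
          (-1 : ℤ) ^ k * (((m+1) + (n + 1 - k)).choose (m+1) : ℤ) * ((m+1).choose k : ℤ)
          = (-1 : ℤ) ^ k * ((m + (n + 1 - k)).choose m : ℤ) * ((m+1).choose k : ℤ)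
            + (-1 : ℤ) ^ k * ((m + (n + 1 - k)).choose (m+1) : ℤ) * ((m+1).choose k : ℤ) := by
        intro k hk
        have h1 : (m+1) + (n + 1 - k) = (m + (n + 1 - k)) + 1 := by omega
        rw [h1, Nat.choose_succ_succ]
        push_cast
        ring
      rw [Finset.sum_congr rfl split, Finset.sum_add_distrib, key, zero_add,
        Finset.sum_range_succ]
      have hz : ((m + (n + 1 - (n+1))).choose (m+1) : ℤ) = 0 := by
        simp [Nat.choose_succ_self]
      rw [hz]
      have congr2 : ∀ k ∈ Finset.range (n + 1),
          (-1 : ℤ) ^ k * ((m + (n + 1 - k)).choose (m+1) : ℤ) * ((m+1).choose k : ℤ)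
          = (-1 : ℤ) ^ k * (((m+1) + (n - k)).choose (m+1) : ℤ) * ((m+1).choose k : ℤ) := by
        intro k hk
        rw [Finset.mem_range] at hk
        have : m + (n + 1 - k) = (m+1) + (n - k) := by omega
        rw [this]
      rw [Finset.sum_congr rfl congr2, ihn]
      ring

/-- For all natural numbers `m ≥ n`,
`∑_{k=0}^{n} (-1)^k * C(m+n-k, m) * C(m, k) = 1`. -/
theorem alternating_binomial_identity (m n : ℕ) (h : n ≤ m) :
    ∑ k ∈ Finset.range (n + 1),
      (-1 : ℤ) ^ k * ((m + n - k).choose m : ℤ) * (m.choose k : ℤ) = 1 := by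
  have := alt_binom_aux m n
  rw [Finset.sum_congr rfl (fun k hk => ?_)]
  · exact this
  · rw [Finset.mem_range] at hk
    have : m + n - k = m + (n - k) := by omega
    rw [this]
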